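/- Let K ≥ 1, n ≥ 2 an integer, ρ1 > 0, 0 < ρ2 < 1, and P_1,…,P_K > 0; set B = 1 − ρ2, C = ρ1 + ρ2, and f(b) = b/(B b + C). Suppose ν* ∈ ℝ and b* ∈ [0,1]^K satisfy ∑_{i=1}^K b_i* = 1, and for each i: b_i* = 0 whenever ν* < −P_i n / C; b_i* = 1 whenever ν* > −P_i n C (B + C − 1)^{n−1}/(B + C)^{n+1}; and otherwise b_i* ∈ (0,1) satisfies P_i n C ((B−1) b_i* + C)^{n−1}/(B b_i* + C)^{n+1} + ν* = 0. Then b* maximizes G_n(b) = ∑_{i=1}^K P_i (1 − (1 − f(b_i))^n) over D = {b ∈ [0,1]^K : ∑_{i=1}^K b_i = 1}. -/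

import Mathlib

lemma tangent_pow (n : ℕ) (hn : 2 ≤ n) (a b : ℝ) (ha : 0 ≤ a) (hb : 0 ≤ b) :
    b ^ n + n * b ^ (n - 1) * (a - b) ≤ a ^ n := by
  rcases eq_or_lt_of_le hb with hb0 | hb0
  · have h1 : (0:ℝ) ^ (n-1) = 0 := by
      apply zero_pow; omega
    rw [← hb0, h1, zero_pow (by omega : n ≠ 0)]
    simpa using pow_nonneg ha n
  · have ht : (-2 : ℝ) ≤ a / b - 1 := by
      have : 0 ≤ a / b := div_nonneg ha hb0.le
      linarith
    have hber := one_add_mul_le_pow ht n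
    have h1 : (1 + (a / b - 1)) = a / b := by ring
    rw [h1] at hber
    have h2 := mul_le_mul_of_nonneg_right hber (pow_pos hb0 n).le
    have h3 : (a / b) ^ n * b ^ n = a ^ n := by
      rw [div_pow]; field_simp
    have h4 : (1 + (n:ℝ) * (a / b - 1)) * b ^ n
        = b ^ n + n * b ^ (n-1) * (a - b) := by
      have hbn : b ^ n = b ^ (n-1) * b := by
        rw [← pow_succ]; congr 1; omega
      rw [hbn]
      have hab : a / b * b = a := div_mul_cancel₀ a hb0.ne'
      linear_combination ((n:ℝ) * b ^ (n-1)) * hab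
    rw [h3, h4] at h2
    exact h2

lemma tangent_phi (n : ℕ) (hn : 2 ≤ n) (B C : ℝ) (hB : 0 < B) (hC : 0 < C)
    (hBC : 1 - B < C) (x y : ℝ) (hx : x ∈ Set.Icc (0:ℝ) 1) (hy : y ∈ Set.Icc (0:ℝ) 1) :
    1 - (((B-1)*y + C)/(B*y + C)) ^ n ≤ 1 - (((B-1)*x + C)/(B*x + C)) ^ n
      + n * C * ((B-1)*x + C) ^ (n-1) / (B*x + C) ^ (n+1) * (y - x) := by
  obtain ⟨hx0, hx1⟩ := hx
  obtain ⟨hy0, hy1⟩ := hy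
  have hu : 0 < B*x + C := by nlinarith
  have hv : 0 < B*y + C := by nlinarith
  have hp : 0 < (B-1)*x + C := by nlinarith
  have hq : 0 < (B-1)*y + C := by nlinarith
  set p := (B-1)*x + C with hpdef
  set q := (B-1)*y + C with hqdef
  set u := B*x + C with hudef
  set v := B*y + C with hvdef
  -- convexity of h
  have hA : -C/u^2 * (y - x) ≤ q/v - p/u := by
    have key : q/v - p/u - (-C/u^2 * (y - x)) = C*B*(y-x)^2/(u^2*v) := by
      rw [hpdef, hqdef, hudef, hvdef]
      field_simp
      ring
    have : 0 ≤ C*B*(y-x)^2/(u^2*v) := by positivity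
    linarith [key ▸ this]
  -- tangent for t^n
  have hT := tangent_pow n hn (q/v) (p/u) (by positivity) (by positivity)
  have hfac : 0 ≤ (n:ℝ) * (p/u)^(n-1) := by positivity
  have hC2 : (n:ℝ) * (p/u)^(n-1) * (-C/u^2 * (y-x)) ≤ (n:ℝ) * (p/u)^(n-1) * (q/v - p/u) :=
    mul_le_mul_of_nonneg_left hA hfac
  -- rewrite the derivative expression
  have hE : n * C * p ^ (n-1) / u ^ (n+1) * (y - x)
      = -((n:ℝ) * (p/u)^(n-1) * (-C/u^2 * (y-x))) := by
    have hsplit : u ^ (n+1) = u ^ (n-1) * u ^ 2 := by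
      rw [← pow_add]; congr 1; omega
    rw [hsplit, div_pow]
    field_simp
  rw [hE]
  nlinarith [hT, hC2]

/-- If `b*` together with a multiplier `ν*` satisfies the KKT-form
description from Theorem 2 (policy 2, mobile user, `L = 1`), then `b*`
maximizes the hit probability `G_n` over `{b ∈ [0,1]^K : ∑ b i = 1}`. -/
theorem kkt_point_maximizes_hit_prob_policy2
    (K n : ℕ) (hK : 1 ≤ K) (hn : 2 ≤ n)
    (ρ1 ρ2 : ℝ) (hρ1 : 0 < ρ1) (hρ2 : ρ2 ∈ Set.Ioo (0 : ℝ) 1)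
    (P : Fin K → ℝ) (hP : ∀ i, 0 < P i)
    (B C : ℝ) (hB : B = 1 - ρ2) (hC : C = ρ1 + ρ2)
    (f : ℝ → ℝ) (hf : f = fun b => b / (B * b + C))
    (ν : ℝ) (b : Fin K → ℝ)
    (hbmem : ∀ i, b i ∈ Set.Icc (0 : ℝ) 1)
    (hsum : ∑ i, b i = 1)
    (hzero : ∀ i, ν < -(P i * n / C) → b i = 0)
    (hone : ∀ i, -(P i * n * C * (B + C - 1) ^ (n - 1) / (B + C) ^ (n + 1)) < ν → b i = 1)
    (hmid : ∀ i, -(P i * n / C) ≤ ν →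
      ν ≤ -(P i * n * C * (B + C - 1) ^ (n - 1) / (B + C) ^ (n + 1)) →
      b i ∈ Set.Ioo (0 : ℝ) 1 ∧
        P i * n * C * ((B - 1) * b i + C) ^ (n - 1) / (B * b i + C) ^ (n + 1) + ν = 0) :
    ∀ c : Fin K → ℝ, (∀ i, c i ∈ Set.Icc (0 : ℝ) 1) → ∑ i, c i = 1 →
      ∑ i, P i * (1 - (1 - f (c i)) ^ n) ≤ ∑ i, P i * (1 - (1 - f (b i)) ^ n) := by
  intro c hcmem hcsum
  obtain ⟨hρ20, hρ21⟩ := hρ2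
  have hBpos : 0 < B := by rw [hB]; linarith
  have hCpos : 0 < C := by rw [hC]; linarith
  have hBC : 1 - B < C := by rw [hB, hC]; linarith
  -- rewrite 1 - f x
  have hfx : ∀ x : ℝ, x ∈ Set.Icc (0:ℝ) 1 → 1 - f x = ((B-1)*x + C)/(B*x + C) := by
    intro x ⟨h0, h1⟩
    have hu : 0 < B*x + C := by nlinarith
    rw [hf]
    field_simp
    ring
  -- per-index inequality
  have key : ∀ i, P i * (1 - (1 - f (c i)) ^ n)
      ≤ P i * (1 - (1 - f (b i)) ^ n) + (-ν) * (c i - b i) := by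
    intro i
    have hbi := hbmem i
    have hci := hcmem i
    have htan := tangent_phi n hn B C hBpos hCpos hBC (b i) (c i) hbi hci
    rw [hfx _ hbi, hfx _ hci]
    -- multiply tangent by P i
    have hPi := (hP i).le
    have h2 : P i * (1 - (((B-1)*(c i) + C)/(B*(c i) + C)) ^ n)
        ≤ P i * (1 - (((B-1)*(b i) + C)/(B*(b i) + C)) ^ n)
          + P i * (n * C * ((B-1)*(b i) + C) ^ (n-1) / (B*(b i) + C) ^ (n+1)) * (c i - b i) := by
      nlinarith [mul_le_mul_of_nonneg_left htan hPi]
    set D := P i * (n * C * ((B-1)*(b i) + C) ^ (n-1) / (B*(b i) + C) ^ (n+1)) with hD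
    -- it suffices: D * (c i - b i) ≤ -ν * (c i - b i)
    have hsuff : D * (c i - b i) ≤ (-ν) * (c i - b i) := by
      by_cases hcase : ν < -(P i * n / C)
      · -- b i = 0, D = P i * n / C ≤ -ν, c i - b i ≥ 0
        have hb0 := hzero i hcase
        have hDval : D = P i * n / C := by
          rw [hD, hb0]
          have h1 : (B-1)*(0:ℝ) + C = C := by ring
          have h2 : B*(0:ℝ) + C = C := by ring
          rw [h1, h2]
          have hsplit : C ^ (n+1) = C ^ (n-1) * C ^ 2 := by
            rw [← pow_add]; congr 1; omega
          rw [hsplit]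
          field_simp
        have hc0 : 0 ≤ c i - b i := by rw [hb0]; simpa using (hcmem i).1
        rw [hDval]
        nlinarith
      · by_cases hcase2 : -(P i * n * C * (B + C - 1) ^ (n - 1) / (B + C) ^ (n + 1)) < ν
        · -- b i = 1
          have hb1 := hone i hcase2
          have hDval : D = P i * n * C * (B + C - 1) ^ (n-1) / (B + C) ^ (n+1) := by
            rw [hD, hb1]
            have h1 : (B-1)*(1:ℝ) + C = B + C - 1 := by ring
            have h2 : B*(1:ℝ) + C = B + C := by ring
            rw [h1, h2]; ring
          have hc1 : c i - b i ≤ 0 := by rw [hb1]; linarith [(hcmem i).2]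
          rw [hDval]
          nlinarith
        · -- middle: equality
          push_neg at hcase hcase2
          have hm := hmid i hcase hcase2
          have hDval : D = -ν := by
            rw [hD]; linear_combination hm.2
          rw [hDval]
    calc P i * (1 - (((B-1)*(c i) + C)/(B*(c i) + C)) ^ n)
        ≤ P i * (1 - (((B-1)*(b i) + C)/(B*(b i) + C)) ^ n) + D * (c i - b i) := h2
      _ ≤ P i * (1 - (((B-1)*(b i) + C)/(B*(b i) + C)) ^ n) + (-ν) * (c i - b i) := by
          linarith [hsuff]
  calc ∑ i, P i * (1 - (1 - f (c i)) ^ n)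
      ≤ ∑ i, (P i * (1 - (1 - f (b i)) ^ n) + (-ν) * (c i - b i)) :=
        Finset.sum_le_sum (fun i _ => key i)
    _ = ∑ i, P i * (1 - (1 - f (b i)) ^ n) + (-ν) * (∑ i, c i - ∑ i, b i) := by
        rw [Finset.sum_add_distrib, ← Finset.mul_sum, Finset.sum_sub_distrib]
    _ = ∑ i, P i * (1 - (1 - f (b i)) ^ n) := by rw [hsum, hcsum]; ring
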